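/- For any semigroup S, the congruence generated by the primary conjugacy relation ∼_p^1 (where s ∼_p^1 t iff s = pr and t = rp for some p,r ∈ S^1) equals ∼_s. -/

import Mathlib

/-- `s ∼ₛ¹ t`: `s = p₁⋯pₙ` and `t = p_{f(1)}⋯p_{f(n)}` for some `p_i ∈ S¹` and a
permutation `f` of `{1,…,n}` (encoded as a list permutation). -/
def SimS1 {S : Type*} [Semigroup S] (s t : S) : Prop :=
  ∃ l l' : List (WithOne S), l.Perm l' ∧ (s : WithOne S) = l.prod ∧ (t : WithOne S) = l'.prod

/-- `∼ₛ`: the transitive closure of `∼ₛ¹`. -/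
def SimS {S : Type*} [Semigroup S] : S → S → Prop := Relation.TransGen SimS1

/-- Primary conjugacy: `s ∼ₚ¹ t` iff `s = pr` and `t = rp` for some `p, r ∈ S¹`. -/
def SimP1 {S : Type*} [Semigroup S] (s t : S) : Prop :=
  ∃ p r : WithOne S, (s : WithOne S) = p * r ∧ (t : WithOne S) = r * p

section Aux
variable {S : Type*} [Semigroup S]

lemma simS1_refl (s : S) : SimS1 s s :=
  ⟨[(s : WithOne S)], [(s : WithOne S)], List.Perm.refl _, by simp, by simp⟩

lemma simS1_symm {s t : S} (h : SimS1 s t) : SimS1 t s := by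
  obtain ⟨l, l', hp, h1, h2⟩ := h
  exact ⟨l', l, hp.symm, h2, h1⟩

lemma simS1_mul {a b c d : S} (h1 : SimS1 a c) (h2 : SimS1 b d) : SimS1 (a * b) (c * d) := by
  obtain ⟨l1, l1', p1, e1, e1'⟩ := h1
  obtain ⟨l2, l2', p2, e2, e2'⟩ := h2
  exact ⟨l1 ++ l2, l1' ++ l2', p1.append p2,
    by rw [WithOne.coe_mul, e1, e2, List.prod_append],
    by rw [WithOne.coe_mul, e1', e2', List.prod_append]⟩

lemma simS_symm {s t : S} (h : SimS s t) : SimS t s := by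
  induction h with
  | single h => exact Relation.TransGen.single (simS1_symm h)
  | tail _ h2 ih => exact Relation.TransGen.head (simS1_symm h2) ih

lemma simS_mul {a b c d : S} (h1 : SimS a c) (h2 : SimS b d) : SimS (a * b) (c * d) := by
  have left : SimS (a * b) (c * b) := by
    induction h1 with
    | single h => exact Relation.TransGen.single (simS1_mul h (simS1_refl b))
    | tail _ h2 ih => exact Relation.TransGen.tail ih (simS1_mul h2 (simS1_refl b))
  have right : SimS (c * b) (c * d) := by
    induction h2 with
    | single h => exact Relation.TransGen.single (simS1_mul (simS1_refl c) h)
    | tail _ h2 ih => exact Relation.TransGen.tail ih (simS1_mul (simS1_refl c) h2)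
  exact left.trans right

/-- `SimS` as a congruence on `S`. -/
def simSCon : Con S where
  r := SimS
  iseqv := ⟨fun s => Relation.TransGen.single (simS1_refl s), simS_symm, Relation.TransGen.trans⟩
  mul' := simS_mul

/-- Lift of `conGen SimP1` to `WithOne S`. -/
def LiftR (a b : WithOne S) : Prop :=
  a = b ∨ ∃ s t : S, a = s ∧ b = t ∧ conGen SimP1 s t

lemma liftR_refl (a : WithOne S) : LiftR a a := Or.inl rfl

lemma liftR_trans {a b c : WithOne S} (h1 : LiftR a b) (h2 : LiftR b c) : LiftR a c := by
  rcases h1 with rfl | ⟨s, t, rfl, rfl, h⟩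
  · exact h2
  · rcases h2 with h2 | ⟨s', t', hs', rfl, h'⟩
    · exact Or.inr ⟨s, t, rfl, h2.symm, h⟩
    · rw [WithOne.coe_inj] at hs'
      exact Or.inr ⟨s, t', rfl, rfl, ((conGen SimP1).trans h (hs' ▸ h'))⟩

lemma liftR_mul_left (x : WithOne S) {a b : WithOne S} (h : LiftR a b) :
    LiftR (x * a) (x * b) := by
  rcases h with rfl | ⟨s, t, rfl, rfl, h⟩
  · exact Or.inl rfl
  · induction x using WithOne.recOneCoe with
    | one => exact Or.inr ⟨s, t, by simp, by simp, h⟩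
    | coe u =>
      exact Or.inr ⟨u * s, u * t, (WithOne.coe_mul u s).symm, (WithOne.coe_mul u t).symm,
        (conGen SimP1).mul ((conGen SimP1).refl u) h⟩

lemma liftR_mul_right (x : WithOne S) {a b : WithOne S} (h : LiftR a b) :
    LiftR (a * x) (b * x) := by
  rcases h with rfl | ⟨s, t, rfl, rfl, h⟩
  · exact Or.inl rfl
  · induction x using WithOne.recOneCoe with
    | one => exact Or.inr ⟨s, t, by simp, by simp, h⟩
    | coe u =>
      exact Or.inr ⟨s * u, t * u, (WithOne.coe_mul s u).symm, (WithOne.coe_mul t u).symm,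
        (conGen SimP1).mul h ((conGen SimP1).refl u)⟩

lemma liftR_swap (p r : WithOne S) : LiftR (p * r) (r * p) := by
  induction p using WithOne.recOneCoe with
  | one => simp [liftR_refl]
  | coe u =>
    induction r using WithOne.recOneCoe with
    | one => simp [liftR_refl]
    | coe v =>
      exact Or.inr ⟨u * v, v * u, (WithOne.coe_mul u v).symm, (WithOne.coe_mul v u).symm,
        ConGen.Rel.of _ _ ⟨(u : WithOne S), (v : WithOne S), (WithOne.coe_mul u v).symm,
          (WithOne.coe_mul v u).symm⟩⟩

lemma liftR_perm {l l' : List (WithOne S)} (hp : l.Perm l') : LiftR l.prod l'.prod := by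
  induction hp with
  | nil => exact liftR_refl _
  | cons x _ ih => simpa only [List.prod_cons] using liftR_mul_left x ih
  | swap x y l =>
    simp only [List.prod_cons, ← mul_assoc]
    exact liftR_mul_right l.prod (liftR_swap y x)
  | trans _ _ ih1 ih2 => exact liftR_trans ih1 ih2

end Aux

/-- The congruence generated by `∼ₚ¹` equals `∼ₛ`. -/
theorem conGen_simP1_eq_simS {S : Type*} [Semigroup S] :
    ∀ s t : S, conGen SimP1 s t ↔ SimS s t := by
  intro s t
  constructor
  · intro h
    refine Con.le_def.mp ((Con.conGen_le (c := simSCon)).mpr ?_) h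
    rintro x y ⟨p, r, h1, h2⟩
    refine Relation.TransGen.single ⟨[p, r], [r, p], List.Perm.swap r p [], ?_, ?_⟩
    · simpa using h1
    · simpa using h2
  · intro h
    have key : ∀ {x y : S}, SimS1 x y → conGen SimP1 x y := by
      rintro x y ⟨l, l', hp, e1, e2⟩
      have := liftR_perm hp
      rw [← e1, ← e2] at this
      rcases this with h | ⟨s', t', hs', ht', h⟩
      · rw [WithOne.coe_inj] at h
        exact h ▸ (conGen SimP1).refl x
      · rw [WithOne.coe_inj] at hs' ht'
        rw [hs', ht']
        exact h
    induction h with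
    | single h => exact key h
    | tail _ h2 ih => exact (conGen SimP1).trans ih (key h2)
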